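/- Let M, Γ₁, …, Γ_L be D×D nonsingular integer matrices that are pairwise commutative and pairwise coprime, and set M_i = MΓ_i for 1 ≤ i ≤ L. Then R = MΓ₁Γ₂⋯Γ_L U is an lcrm of M₁, …, M_L for any unimodular matrix U, and every integer vector m ∈ 𝒩(R) is uniquely determined by its remainders r_i = ⟨m⟩_{M_i}, 1 ≤ i ≤ L. -/

import Mathlib

open Matrix

/-- An integer matrix is unimodular if its determinant is `1` or `-1`. -/
def Unimod {D : ℕ} (U : Matrix (Fin D) (Fin D) ℤ) : Prop := U.det = 1 ∨ U.det = -1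

/-- `C` is a common right multiple (crm) of the family `M`. -/
def IsCRM {D n : ℕ} (M : Fin n → Matrix (Fin D) (Fin D) ℤ)
    (C : Matrix (Fin D) (Fin D) ℤ) : Prop :=
  C.det ≠ 0 ∧ ∀ i, ∃ Q : Matrix (Fin D) (Fin D) ℤ, C = M i * Q

/-- `C` is a least common right multiple (lcrm) of the family `M`. -/
def IsLCRM {D n : ℕ} (M : Fin n → Matrix (Fin D) (Fin D) ℤ)
    (C : Matrix (Fin D) (Fin D) ℤ) : Prop :=
  IsCRM M C ∧ ∀ C', IsCRM M C' → ∃ P : Matrix (Fin D) (Fin D) ℤ, C' = C * P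

/-- `C` is a common left multiple (clm) of the family `M`. -/
def IsCLM {D n : ℕ} (M : Fin n → Matrix (Fin D) (Fin D) ℤ)
    (C : Matrix (Fin D) (Fin D) ℤ) : Prop :=
  C.det ≠ 0 ∧ ∀ i, ∃ Q : Matrix (Fin D) (Fin D) ℤ, C = Q * M i

/-- `C` is a least common left multiple (lclm) of the family `M`. -/
def IsLCLM {D n : ℕ} (M : Fin n → Matrix (Fin D) (Fin D) ℤ)
    (C : Matrix (Fin D) (Fin D) ℤ) : Prop :=
  IsCLM M C ∧ ∀ C', IsCLM M C' → ∃ P : Matrix (Fin D) (Fin D) ℤ, C' = P * C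

/-- `B` is a common left divisor (cld) of the family `M`. -/
def IsCLD {D n : ℕ} (M : Fin n → Matrix (Fin D) (Fin D) ℤ)
    (B : Matrix (Fin D) (Fin D) ℤ) : Prop :=
  B.det ≠ 0 ∧ ∀ i, ∃ K : Matrix (Fin D) (Fin D) ℤ, M i = B * K

/-- `B` is a greatest common left divisor (gcld) of the family `M`:
`B` is a cld, and every cld of the family is a left divisor of `B`. -/
def IsGCLD {D n : ℕ} (M : Fin n → Matrix (Fin D) (Fin D) ℤ)
    (B : Matrix (Fin D) (Fin D) ℤ) : Prop :=
  IsCLD M B ∧ ∀ B', IsCLD M B' → ∃ K : Matrix (Fin D) (Fin D) ℤ, B = B' * K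

/-- `A` and `B` are left coprime: every (nonsingular) common left divisor is unimodular. -/
def LeftCoprime {D : ℕ} (A B : Matrix (Fin D) (Fin D) ℤ) : Prop :=
  ∀ C : Matrix (Fin D) (Fin D) ℤ, C.det ≠ 0 →
    (∃ K, A = C * K) → (∃ K, B = C * K) → Unimod C

/-- `A` and `B` are right coprime: every (nonsingular) common right divisor is unimodular. -/
def RightCoprime {D : ℕ} (A B : Matrix (Fin D) (Fin D) ℤ) : Prop :=
  ∀ C : Matrix (Fin D) (Fin D) ℤ, C.det ≠ 0 →
    (∃ K, A = K * C) → (∃ K, B = K * C) → Unimod C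

/-- `A` and `B` are coprime (for commuting matrices left and right coprimeness coincide). -/
def MatCoprime {D : ℕ} (A B : Matrix (Fin D) (Fin D) ℤ) : Prop :=
  LeftCoprime A B ∧ RightCoprime A B

/-- The lattice generated by an integer matrix `M`: all integer combinations `M n`. -/
def LAT {D : ℕ} (M : Matrix (Fin D) (Fin D) ℤ) : Set (Fin D → ℤ) :=
  {v | ∃ n : Fin D → ℤ, v = M.mulVec n}

/-- `𝒩(M)`: the integer vectors of the form `M x` with `x ∈ [0,1)^D`. -/
def NSet {D : ℕ} (M : Matrix (Fin D) (Fin D) ℤ) : Set (Fin D → ℤ) :=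
  {k | ∃ x : Fin D → ℚ, (∀ j, 0 ≤ x j ∧ x j < 1) ∧
      (M.map (Int.cast : ℤ → ℚ)).mulVec x = fun j => (k j : ℚ)}

/-- `r` is the remainder of `m` modulo `M`: `r ∈ 𝒩(M)` and `m − r ∈ LAT(M)`. -/
def IsRem {D : ℕ} (M : Matrix (Fin D) (Fin D) ℤ) (m r : Fin D → ℤ) : Prop :=
  r ∈ NSet M ∧ (m - r) ∈ LAT M

/-- The Euclidean norm on `ℝ^D`. -/
noncomputable def euclNorm {D : ℕ} (v : Fin D → ℝ) : ℝ := Real.sqrt (∑ j, (v j) ^ 2)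

/-- The lattice generated by a real matrix `M`: all integer combinations `M n`. -/
def LATR {D : ℕ} (M : Matrix (Fin D) (Fin D) ℝ) : Set (Fin D → ℝ) :=
  {v | ∃ n : Fin D → ℤ, v = M.mulVec (fun j => (n j : ℝ))}

abbrev Mt (D : ℕ) := Matrix (Fin D) (Fin D) ℤ
noncomputable abbrev φ {D : ℕ} : Matrix (Fin D) (Fin D) ℤ →+* Matrix (Fin D) (Fin D) ℚ :=
  (Int.castRingHom ℚ).mapMatrix

lemma phi_inj : Function.Injective (φ (D := D)) := by
  intro A B h
  ext i j
  have := congrFun (congrFun (congrArg (fun M => M) h) i) j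
  simpa [RingHom.mapMatrix_apply, Matrix.map_apply] using this

lemma phi_det (A : Mt D) : (φ A).det = (A.det : ℚ) := by
  rw [show φ A = (Int.castRingHom ℚ).mapMatrix A from rfl, ← RingHom.map_det]; rfl

lemma phi_det_ne (A : Mt D) (h : A.det ≠ 0) : (φ A).det ≠ 0 := by
  rw [phi_det]; exact_mod_cast h

lemma mcancel {M X Y : Mt D} (hM : M.det ≠ 0) (h : M * X = M * Y) : X = Y := by
  apply phi_inj
  have h2 : φ M * φ X = φ M * φ Y := by
    rw [← _root_.map_mul, ← _root_.map_mul, h]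
  have hu : IsUnit (φ M).det := (phi_det_ne M hM).isUnit
  calc φ X = (φ M)⁻¹ * (φ M * φ X) := by rw [← mul_assoc, Matrix.nonsing_inv_mul _ hu, one_mul]
    _ = (φ M)⁻¹ * (φ M * φ Y) := by rw [h2]
    _ = φ Y := by rw [← mul_assoc, Matrix.nonsing_inv_mul _ hu, one_mul]

lemma rows_li {A : Mt D} (hA : A.det ≠ 0) : LinearIndependent ℤ (fun i => A i) := by
  rw [Fintype.linearIndependent_iff]
  intro g hg i
  have hq : (fun j => ((g j : ℚ))) ᵥ* (φ A) = 0 := by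
    funext k
    have := congrFun hg k
    simp only [Finset.sum_apply, Pi.smul_apply, smul_eq_mul, Pi.zero_apply] at this
    simp only [Matrix.vecMul, dotProduct, RingHom.mapMatrix_apply, Matrix.map_apply,
      Pi.zero_apply]
    have : ((∑ x : Fin D, g x * A x k : ℤ) : ℚ) = 0 := by exact_mod_cast congrArg (fun (x : ℤ) => (x : ℚ)) this
    push_cast at this
    convert this using 2
    rfl
  have hu : IsUnit (φ A).det := (phi_det_ne A hA).isUnit
  have : (fun j => ((g j : ℚ))) = 0 := by
    have h1 := congrArg (fun v => v ᵥ* (φ A)⁻¹) hq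
    simp only [Matrix.zero_vecMul, ← Matrix.vecMul_vecMul] at h1
    rw [show ((fun j => ((g j : ℚ))) ᵥ* (φ A)) ᵥ* (φ A)⁻¹ = (fun j => ((g j : ℚ))) ᵥ* ((φ A) * (φ A)⁻¹) from Matrix.vecMul_vecMul _ _ _, Matrix.mul_nonsing_inv _ hu, Matrix.vecMul_one] at h1
    exact h1
  have h2 := congrFun this i
  simpa using h2

lemma bezout {A B : Mt D} (hA : A.det ≠ 0) (hcop : RightCoprime A B) :
    ∃ Z₁ Z₂ : Mt D, Z₁ * A + Z₂ * B = 1 := by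
  classical
  set f : ((Fin D → ℤ) × (Fin D → ℤ)) →ₗ[ℤ] (Fin D → ℤ) :=
    A.vecMulLinear.comp (LinearMap.fst ℤ _ _) + B.vecMulLinear.comp (LinearMap.snd ℤ _ _) with hf
  have hfapp : ∀ p : (Fin D → ℤ) × (Fin D → ℤ), f p = p.1 ᵥ* A + p.2 ᵥ* B := fun p => rfl
  set S := LinearMap.range f with hS
  have hAmem : ∀ i, A i ∈ S := by
    intro i
    refine ⟨(Pi.single i 1, 0), ?_⟩
    rw [hfapp]
    funext k
    simp [Matrix.vecMul, dotProduct, Pi.single_apply, Finset.sum_ite_eq]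
  have hBmem : ∀ i, B i ∈ S := by
    intro i
    refine ⟨(0, Pi.single i 1), ?_⟩
    rw [hfapp]
    funext k
    simp [Matrix.vecMul, dotProduct, Pi.single_apply, Finset.sum_ite_eq]
  haveI : Module.Finite ℤ S := by
    have : S.FG := IsNoetherian.noetherian S
    exact Module.Finite.iff_fg.mpr this
  haveI : Module.Free ℤ S := Module.free_of_finite_type_torsion_free'
  -- finrank
  have hrank : Module.finrank ℤ S = D := by
    apply le_antisymm
    · have h1 := Submodule.finrank_le S
      simpa [Module.finrank_pi] using h1
    · have hli : LinearIndependent ℤ (fun i => (⟨A i, hAmem i⟩ : S)) := by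
        apply LinearIndependent.of_comp S.subtype
        exact rows_li hA
      simpa using hli.fintype_card_le_finrank
  let b : Module.Basis (Fin D) ℤ S := Module.finBasisOfFinrankEq ℤ S hrank
  set H : Mt D := Matrix.of (fun i j => ((b i : Fin D → ℤ)) j) with hH
  -- every element of S is a vecMul combination of rows of H
  have hrepr : ∀ (v : Fin D → ℤ) (hv : v ∈ S),
      v = (fun j => b.repr ⟨v, hv⟩ j) ᵥ* H := by
    intro v hv
    have h1 : (⟨v, hv⟩ : S) = ∑ j, b.repr ⟨v, hv⟩ j • b j := (b.sum_repr _).symm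
    have h2 : v = ∑ j, b.repr ⟨v, hv⟩ j • (b j : Fin D → ℤ) := by
      have := congrArg (Subtype.val) h1
      exact this.trans (by rw [Submodule.coe_sum]; refine Finset.sum_congr rfl (fun j _ => ?_); funext t; simp)
    funext k
    have h3 := congrFun h2 k
    simp only [Finset.sum_apply, Pi.smul_apply, smul_eq_mul] at h3
    rw [h3]
    simp [Matrix.vecMul, dotProduct, hH]
  -- A = K * H, B = K' * H
  obtain ⟨K, hK⟩ : ∃ K : Mt D, A = K * H := by
    refine ⟨Matrix.of (fun i j => b.repr ⟨A i, hAmem i⟩ j), ?_⟩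
    ext i k
    have := congrFun (hrepr (A i) (hAmem i)) k
    simpa [Matrix.mul_apply, Matrix.vecMul, dotProduct] using this
  obtain ⟨K', hK'⟩ : ∃ K' : Mt D, B = K' * H := by
    refine ⟨Matrix.of (fun i j => b.repr ⟨B i, hBmem i⟩ j), ?_⟩
    ext i k
    have := congrFun (hrepr (B i) (hBmem i)) k
    simpa [Matrix.mul_apply, Matrix.vecMul, dotProduct] using this
  have hHdet : H.det ≠ 0 := by
    intro h0
    apply hA
    rw [hK, Matrix.det_mul, h0, mul_zero]
  have hHuni : Unimod H := hcop H hHdet ⟨K, hK⟩ ⟨K', hK'⟩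
  -- integer inverse V with V * H = 1
  obtain ⟨V, hV⟩ : ∃ V : Mt D, V * H = 1 := by
    rcases hHuni with h1 | h1
    · exact ⟨H.adjugate, by rw [Matrix.adjugate_mul, h1, one_smul]⟩
    · exact ⟨-H.adjugate, by rw [neg_mul, Matrix.adjugate_mul, h1, neg_smul, one_smul, neg_neg]⟩
  -- rows of H lie in S, hence H = X₀ * A + Y₀ * B
  have hHmem : ∀ j, ∃ p : (Fin D → ℤ) × (Fin D → ℤ), p.1 ᵥ* A + p.2 ᵥ* B = H j := by
    intro j
    obtain ⟨p, hp⟩ := (b j).2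
    exact ⟨p, by rw [← hfapp]; exact hp⟩
  choose p hp using hHmem
  set X₀ : Mt D := Matrix.of (fun j => (p j).1) with hX₀
  set Y₀ : Mt D := Matrix.of (fun j => (p j).2) with hY₀
  have hHeq : H = X₀ * A + Y₀ * B := by
    ext j k
    have := congrFun (hp j) k
    simpa [Matrix.mul_apply, Matrix.vecMul, dotProduct, Matrix.add_apply, hX₀, hY₀] using this.symm
  refine ⟨V * X₀, V * Y₀, ?_⟩
  rw [mul_assoc, mul_assoc, ← mul_add, ← hHeq, hV]


lemma pairdiv_ring {R : Type*} [Ring R] {a₁ a₂ b₂ x q₁ q₂ z₁ z₂ : R}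
    (hb₂ : a₂ * b₂ = 1) (hb₂' : b₂ * a₂ = 1)
    (hc : a₁ * a₂ = a₂ * a₁) (hx1 : x = a₁ * q₁) (hx2 : x = a₂ * q₂)
    (hb : z₁ * a₁ + z₂ * a₂ = 1) : x = a₁ * a₂ * (z₁ * q₂ + z₂ * q₁) := by
  have hcinv : a₁ * b₂ = b₂ * a₁ := by
    have h := congrArg (fun y => b₂ * y * b₂) hc
    rw [← mul_assoc, ← mul_assoc, hb₂', one_mul, mul_assoc, mul_assoc, hb₂, mul_one] at h
    exact h.symm
  have ha2w : a₂ * (b₂ * q₁) = q₁ := by rw [← mul_assoc, hb₂, one_mul]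
  have ha1w : a₁ * (b₂ * q₁) = q₂ := by
    have h1 : a₂ * (a₁ * (b₂ * q₁)) = a₂ * q₂ := by
      rw [← mul_assoc, ← hc, mul_assoc, ha2w, ← hx1, hx2]
    have := congrArg (fun y => b₂ * y) h1
    rw [← mul_assoc, ← mul_assoc, hb₂', one_mul] at this
    rw [this, ← mul_assoc, hb₂', one_mul]
  calc x = a₁ * q₁ := hx1
    _ = a₁ * (a₂ * (b₂ * q₁)) := by rw [ha2w]
    _ = a₁ * a₂ * ((z₁ * a₁ + z₂ * a₂) * (b₂ * q₁)) := by rw [hb, one_mul, mul_assoc]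
    _ = a₁ * a₂ * (z₁ * q₂ + z₂ * q₁) := by
        rw [add_mul, mul_assoc z₁, mul_assoc z₂, ha1w, ha2w]

lemma pairdiv {A₁ A₂ X Q₁ Q₂ Z₁ Z₂ : Mt D} (h1 : A₁.det ≠ 0) (h2 : A₂.det ≠ 0)
    (hc : A₁ * A₂ = A₂ * A₁) (hq1 : X = A₁ * Q₁) (hq2 : X = A₂ * Q₂)
    (hb : Z₁ * A₁ + Z₂ * A₂ = 1) : ∃ W, X = A₁ * A₂ * W := by
  refine ⟨Z₁ * Q₂ + Z₂ * Q₁, ?_⟩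
  apply phi_inj
  simp only [_root_.map_mul, _root_.map_add]
  have hu2 : IsUnit (φ A₂).det := (phi_det_ne A₂ h2).isUnit
  exact pairdiv_ring (Matrix.mul_nonsing_inv _ hu2) (Matrix.nonsing_inv_mul _ hu2)
    (by rw [← _root_.map_mul, ← _root_.map_mul, hc])
    (by rw [← _root_.map_mul, ← hq1]) (by rw [← _root_.map_mul, ← hq2])
    (by rw [← _root_.map_mul, ← _root_.map_mul, ← _root_.map_add, hb, _root_.map_one])

lemma listdet : ∀ l : List (Mt D), (∀ G ∈ l, G.det ≠ 0) → l.prod.det ≠ 0 := by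
  intro l
  induction l with
  | nil => intro _; simp
  | cons B t ih =>
    intro h
    rw [List.prod_cons, Matrix.det_mul]
    exact mul_ne_zero (h B (by simp)) (ih (fun G hG => h G (by simp [hG])))

lemma listcomm {G : Mt D} : ∀ l : List (Mt D), (∀ B ∈ l, G * B = B * G) →
    G * l.prod = l.prod * G := by
  intro l
  induction l with
  | nil => intro _; simp
  | cons B t ih =>
    intro h
    rw [List.prod_cons, ← mul_assoc, h B (by simp), mul_assoc, ih (fun B hB => h B (by simp [hB])),
      ← mul_assoc]

lemma rc_prod {G : Mt D} (hG : G.det ≠ 0) : ∀ l : List (Mt D),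
    (∀ B ∈ l, G * B = B * G ∧ RightCoprime G B) → RightCoprime G l.prod := by
  intro l
  induction l with
  | nil =>
    intro _ C hC _ h1
    obtain ⟨K, hK⟩ := h1
    rw [List.prod_nil] at hK
    have : K.det * C.det = 1 := by rw [← Matrix.det_mul, ← hK, Matrix.det_one]
    have : IsUnit C.det := IsUnit.of_mul_eq_one _ (by rw [mul_comm] at this; exact this)
    rcases Int.isUnit_iff.mp this with h | h
    · exact Or.inl h
    · exact Or.inr h
  | cons B t ih =>
    intro h C hC hGC hBPC
    have hGB := h B (by simp)
    have hIH : RightCoprime G t.prod := ih (fun B' hB' => h B' (by simp [hB']))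
    obtain ⟨Z₁, Z₂, hb⟩ := bezout hG hGB.2
    obtain ⟨K₁, hK₁⟩ := hGC
    obtain ⟨K₂, hK₂⟩ := hBPC
    rw [List.prod_cons] at hK₂
    -- C right-divides t.prod
    have hGP : G * t.prod = t.prod * G := listcomm t (fun B' hB' => (h B' (by simp [hB'])).1)
    have hPdiv : ∃ K, t.prod = K * C := by
      refine ⟨Z₁ * t.prod * K₁ + Z₂ * K₂, ?_⟩
      calc t.prod = (Z₁ * G + Z₂ * B) * t.prod := by rw [hb, one_mul]
        _ = Z₁ * (G * t.prod) + Z₂ * (B * t.prod) := by rw [add_mul, mul_assoc, mul_assoc]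
        _ = Z₁ * (t.prod * G) + Z₂ * (B * t.prod) := by rw [hGP]
        _ = Z₁ * t.prod * (K₁ * C) + Z₂ * (K₂ * C) := by
              rw [← hK₂, hK₁, ← mul_assoc Z₁]
        _ = (Z₁ * t.prod * K₁ + Z₂ * K₂) * C := by
              rw [add_mul, mul_assoc (Z₁ * t.prod), mul_assoc Z₂]
    exact hIH C hC ⟨K₁, hK₁⟩ hPdiv

lemma listkey : ∀ l : List (Mt D), (∀ G ∈ l, G.det ≠ 0) →
    l.Pairwise (fun A B => A * B = B * A ∧ RightCoprime A B) →
    ∀ X : Mt D, (∀ G ∈ l, ∃ Q, X = G * Q) → ∃ W, X = l.prod * W := by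
  intro l
  induction l with
  | nil => intro _ _ X _; exact ⟨X, by simp⟩
  | cons G t ih =>
    intro hdet hpw X hdiv
    rw [List.pairwise_cons] at hpw
    obtain ⟨hGt, hpwt⟩ := hpw
    obtain ⟨W₁, hW₁⟩ := ih (fun B hB => hdet B (by simp [hB])) hpwt X
      (fun B hB => hdiv B (by simp [hB]))
    obtain ⟨Q, hQ⟩ := hdiv G (by simp)
    have hGdet : G.det ≠ 0 := hdet G (by simp)
    have hPdet : t.prod.det ≠ 0 := listdet t (fun B hB => hdet B (by simp [hB]))
    have hGP : G * t.prod = t.prod * G := listcomm t (fun B hB => (hGt B hB).1)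
    have hrc : RightCoprime G t.prod := rc_prod hGdet t (fun B hB => hGt B hB)
    obtain ⟨Z₁, Z₂, hb⟩ := bezout hGdet hrc
    obtain ⟨W, hW⟩ := pairdiv hGdet hPdet hGP hQ hW₁ hb
    exact ⟨W, by rw [List.prod_cons]; exact hW⟩

lemma unimod_inv {U : Mt D} (hU : Unimod U) : ∃ V : Mt D, U * V = 1 ∧ V * U = 1 := by
  rcases hU with h | h
  · exact ⟨U.adjugate, by rw [Matrix.mul_adjugate, h, one_smul],
      by rw [Matrix.adjugate_mul, h, one_smul]⟩
  · exact ⟨-U.adjugate, by rw [mul_neg, Matrix.mul_adjugate, h, neg_smul, one_smul, neg_neg],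
      by rw [neg_mul, Matrix.adjugate_mul, h, neg_smul, one_smul, neg_neg]⟩

lemma prod_pull {L : ℕ} (Γ : Fin L → Mt D) (hcomm2 : ∀ i j, Γ i * Γ j = Γ j * Γ i) (i : Fin L) :
    ∃ T : Mt D, (List.ofFn Γ).prod = Γ i * T := by
  classical
  have hmem : Γ i ∈ List.ofFn Γ := by
    rw [List.mem_ofFn]; exact ⟨i, rfl⟩
  have hperm : (Γ i :: (List.ofFn Γ).erase (Γ i)).Perm (List.ofFn Γ) :=
    (List.perm_cons_erase hmem).symm
  have hpw : (Γ i :: (List.ofFn Γ).erase (Γ i)).Pairwise Commute := by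
    apply List.Pairwise.perm ?_ hperm.symm ?_
    · rw [List.pairwise_ofFn]
      intro a b _
      exact hcomm2 a b
    · intro a b h; exact h.symm
  refine ⟨((List.ofFn Γ).erase (Γ i)).prod, ?_⟩
  rw [← List.prod_cons]
  exact (hperm.prod_eq' hpw).symm

lemma mulVec_cast (A : Mt D) (v : Fin D → ℤ) :
    (A.map (Int.cast : ℤ → ℚ)).mulVec (fun j => (v j : ℚ)) = fun j => ((A.mulVec v) j : ℚ) := by
  funext k
  simp [Matrix.mulVec, dotProduct, Matrix.map_apply]

lemma ofFn_det {L : ℕ} (Γ : Fin L → Mt D) (hΓ : ∀ i, (Γ i).det ≠ 0) :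
    (List.ofFn Γ).prod.det ≠ 0 := by
  apply listdet
  intro G hG
  rw [List.mem_ofFn] at hG
  obtain ⟨i, rfl⟩ := hG
  exact hΓ i


/-- for `M, Γ₁,…,Γ_L` pairwise commutative and coprime,
`R = MΓ₁⋯Γ_L U` is an lcrm of the moduli `MΓᵢ`, and every `m ∈ 𝒩(R)` is uniquely
determined by its remainders. -/
theorem stmt8 {D L : ℕ} (hL : 1 ≤ L)
    (M : Matrix (Fin D) (Fin D) ℤ) (hM : M.det ≠ 0)
    (Γ : Fin L → Matrix (Fin D) (Fin D) ℤ) (hΓ : ∀ i, (Γ i).det ≠ 0)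
    (hcomm1 : ∀ i, M * Γ i = Γ i * M)
    (hcop1 : ∀ i, MatCoprime M (Γ i))
    (hcomm2 : ∀ i j, Γ i * Γ j = Γ j * Γ i)
    (hcop2 : ∀ i j, i ≠ j → MatCoprime (Γ i) (Γ j))
    (U : Matrix (Fin D) (Fin D) ℤ) (hU : Unimod U)
    (R : Matrix (Fin D) (Fin D) ℤ) (hR : R = M * (List.ofFn Γ).prod * U) :
    IsLCRM (fun i => M * Γ i) R ∧
      ∀ (m m' : Fin D → ℤ) (r : Fin L → Fin D → ℤ),
        m ∈ NSet R → m' ∈ NSet R →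
        (∀ i, IsRem (M * Γ i) m (r i)) →
        (∀ i, IsRem (M * Γ i) m' (r i)) → m = m' := by
  classical
  have hPdet : (List.ofFn Γ).prod.det ≠ 0 := ofFn_det Γ hΓ
  set P : Matrix (Fin D) (Fin D) ℤ := (List.ofFn Γ).prod with hP
  obtain ⟨V, hUV, hVU⟩ := unimod_inv hU
  have hUdet : U.det ≠ 0 := by rcases hU with h | h <;> simp [h]
  have hRdet : R.det ≠ 0 := by
    rw [hR, Matrix.det_mul, Matrix.det_mul]
    exact mul_ne_zero (mul_ne_zero hM hPdet) hUdet
  have hpw : (List.ofFn Γ).Pairwise (fun A B => A * B = B * A ∧ RightCoprime A B) := by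
    rw [List.pairwise_ofFn]
    intro a b hab
    exact ⟨hcomm2 a b, (hcop2 a b (ne_of_lt hab)).2⟩
  have hofdet : ∀ G ∈ List.ofFn Γ, G.det ≠ 0 := by
    intro G hG; rw [List.mem_ofFn] at hG; obtain ⟨i, rfl⟩ := hG; exact hΓ i
  have hkey : ∀ X : Matrix (Fin D) (Fin D) ℤ, (∀ i, ∃ Q, X = Γ i * Q) → ∃ W, X = P * W := by
    intro X hdiv
    apply listkey _ hofdet hpw
    intro G hG; rw [List.mem_ofFn] at hG; obtain ⟨i, rfl⟩ := hG; exact hdiv i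
  have hMP_R : M * P = R * V := by
    rw [hR, mul_assoc (M * P), hUV, mul_one]
  set i0 : Fin L := ⟨0, hL⟩
  constructor
  · constructor
    · refine ⟨hRdet, ?_⟩
      intro i
      obtain ⟨T, hT⟩ := prod_pull Γ hcomm2 i
      refine ⟨T * U, ?_⟩
      rw [hR, show P = Γ i * T from hP.trans hT, ← mul_assoc, mul_assoc (M * Γ i)]
    · rintro C' ⟨hC'det, hC'div⟩
      choose Q hQ using hC'div
      have hX : ∀ i, Γ i0 * Q i0 = Γ i * Q i := by
        intro i
        apply mcancel hM
        rw [← mul_assoc, ← hQ, ← mul_assoc, ← hQ]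
      obtain ⟨W, hW⟩ := hkey (Γ i0 * Q i0) (fun i => ⟨Q i, hX i⟩)
      refine ⟨V * W, ?_⟩
      calc C' = M * (Γ i0 * Q i0) := by rw [← mul_assoc, ← hQ]
        _ = M * (P * W) := by rw [hW]
        _ = M * P * W := by rw [mul_assoc]
        _ = R * V * W := by rw [hMP_R]
        _ = R * (V * W) := by rw [mul_assoc]
  · intro m m' r hm hm' hrm hrm'
    by_cases hD : D = 0
    · funext j; exact absurd j.isLt (by omega)
    have hD' : 0 < D := Nat.pos_of_ne_zero hD
    set j0 : Fin D := ⟨0, hD'⟩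
    -- m - m' lies in each lattice
    have hv : ∀ i, ∃ nv : Fin D → ℤ, m - m' = (M * Γ i).mulVec nv := by
      intro i
      obtain ⟨a, ha⟩ := (hrm i).2
      obtain ⟨b, hb⟩ := (hrm' i).2
      refine ⟨a - b, ?_⟩
      rw [Matrix.mulVec_sub, ← ha, ← hb]
      abel
    choose nv hnv using hv
    set Xv : Matrix (Fin D) (Fin D) ℤ := Matrix.of (fun k _ => (m - m') k) with hXv
    have hXvi : ∀ i, Xv = M * (Γ i * Matrix.of (fun k (_ : Fin D) => nv i k)) := by
      intro i
      rw [← mul_assoc]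
      ext k j
      have h1 := congrFun (hnv i) k
      simp only [Pi.sub_apply] at h1
      simp only [hXv, Matrix.of_apply, Matrix.mul_apply, Pi.sub_apply]
      rw [h1]
      simp [Matrix.mulVec, dotProduct, Matrix.mul_apply]
    have hY : ∀ i, Γ i0 * Matrix.of (fun k (_ : Fin D) => nv i0 k)
        = Γ i * Matrix.of (fun k (_ : Fin D) => nv i k) := by
      intro i
      apply mcancel hM
      rw [← hXvi i0, ← hXvi i]
    obtain ⟨W, hW⟩ := hkey _ (fun i => ⟨_, hY i⟩)
    have hXvR : Xv = R * (V * W) := by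
      calc Xv = M * (Γ i0 * Matrix.of (fun k (_ : Fin D) => nv i0 k)) := hXvi i0
        _ = M * (P * W) := by rw [hW]
        _ = M * P * W := by rw [mul_assoc]
        _ = R * V * W := by rw [hMP_R]
        _ = R * (V * W) := by rw [mul_assoc]
    set w : Fin D → ℤ := fun a => (V * W) a j0 with hw
    have hvec : m - m' = R.mulVec w := by
      funext k
      have h2 := congrFun (congrFun hXvR k) j0
      simp only [hXv, Matrix.of_apply] at h2
      rw [h2]
      simp [Matrix.mulVec, dotProduct, Matrix.mul_apply, hw]
    -- rational part
    obtain ⟨x, hxb, hxe⟩ := hm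
    obtain ⟨x', hxb', hxe'⟩ := hm'
    have hRq : R.map (Int.cast : ℤ → ℚ) = φ R := rfl
    have hRqdet : (R.map (Int.cast : ℤ → ℚ)).det ≠ 0 := by
      rw [hRq]; exact phi_det_ne R hRdet
    have hu : IsUnit (R.map (Int.cast : ℤ → ℚ)).det := hRqdet.isUnit
    have hcast : (R.map (Int.cast : ℤ → ℚ)).mulVec (fun a => (w a : ℚ))
        = fun k => ((m k : ℚ) - (m' k : ℚ)) := by
      rw [mulVec_cast]
      funext k
      rw [← hvec]
      push_cast
      simp
    have hsub : (R.map (Int.cast : ℤ → ℚ)).mulVec (x - x')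
        = (R.map (Int.cast : ℤ → ℚ)).mulVec (fun a => (w a : ℚ)) := by
      rw [Matrix.mulVec_sub, hxe, hxe', hcast]
      funext k
      simp
    have hxx : x - x' = fun a => (w a : ℚ) := by
      have h3 := congrArg (fun v => (R.map (Int.cast : ℤ → ℚ))⁻¹.mulVec v) hsub
      simpa [Matrix.mulVec_mulVec, Matrix.nonsing_inv_mul _ hu, Matrix.one_mulVec] using h3
    have hw0 : ∀ j, w j = 0 := by
      intro j
      have h4 := congrFun hxx j
      simp only [Pi.sub_apply] at h4
      have b1 := (hxb j).1; have b2 := (hxb j).2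
      have b3 := (hxb' j).1; have b4 := (hxb' j).2
      have : ((w j : ℚ)) < 1 ∧ (-1 : ℚ) < (w j : ℚ) := by constructor <;> (rw [← h4]; linarith)
      have h5 : (w j) < 1 := by exact_mod_cast this.1
      have h6 : (-1 : ℤ) < w j := by exact_mod_cast this.2
      omega
    have hxeq : x = x' := by
      funext j
      have h4 := congrFun hxx j
      simp only [Pi.sub_apply, hw0 j] at h4
      push_cast at h4
      linarith
    funext k
    have h7 : (fun j => ((m j : ℚ))) = fun j => ((m' j : ℚ)) := by
      rw [← hxe, ← hxe', hxeq]
    exact_mod_cast congrFun h7 k
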